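/- Suppose φ(G,f,g) (with G of cutwidth r+1) is the XOR system as above, so that it has no width-r resolution refutation. Then for any two sets S, T of at most r/3 variables, it cannot simultaneously hold that S implies T with the same parity and S implies T with opposite parity, both via width-2r/3 resolution. -/

import Mathlib

open SimpleGraph

noncomputable def cutCount {V : Type*} (G : SimpleGraph V) (S : Set V) : ℕ :=
  {p : V × V | p.1 ∈ S ∧ p.2 ∉ S ∧ G.Adj p.1 p.2}.ncard

noncomputable def cutwidth {V : Type*} [Fintype V] (G : SimpleGraph V) : ℕ :=
  sInf { w | ∃ π : Fin (Fintype.card V) ≃ V,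
    ∀ i : Fin (Fintype.card V), cutCount G (π '' {j | j ≤ i}) ≤ w }

def EvenParity {V : Type*} [Fintype V] [DecidableEq V] (G : SimpleGraph V)
    [DecidableRel G.Adj] (f : Sym2 V → Bool) : Prop :=
  Even ((G.edgeFinset.filter fun e => f e = true).card)

/-- Variables of the XOR system `φ(G,f,g)`: `(false, v, u)` is `x_{(v,u)}` and
`(true, v, u)` is `y_{(v,u)}`, for each directed edge `(v,u)`. -/
abbrev XVar (V : Type*) := Bool × V × V

/-- The XOR constraint system `φ(G,f,g)`: a constraint is a pair (set of variables,
right-hand side). For each vertex `v` and neighbor `u`: `x_{(v,u)} ⊕ y_{(v,u)} = 0`;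
for each vertex `v`: `⊕_{u ∈ Γ(v)} y_{(v,u)} = 0`; for each edge `(u,v)`:
`x_{(u,v)} ⊕ x_{(v,u)} = f((u,v)) ⊕ g((u,v))`. -/
def phiSystem {V : Type*} [Fintype V] [DecidableEq V] (G : SimpleGraph V)
    [DecidableRel G.Adj] (f g : Sym2 V → Bool) : Set (Finset (XVar V) × Bool) :=
  {c | (∃ v u, G.Adj v u ∧ c = ({(false, v, u), (true, v, u)}, false))
    ∨ (∃ v : V, c = ((G.neighborFinset v).image (fun u => (true, v, u)), false))
    ∨ (∃ v u, G.Adj v u ∧ c = ({(false, v, u), (false, u, v)}, f s(v, u) ^^ g s(v, u)))}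

/-- `XorDerives Φ w S T sgn`: from the XOR constraint `⊕S = 0` one can derive
`⊕T = sgn` by a sequence of steps each XORing in a constraint of `Φ`, with every
intermediate constraint containing at most `w` variables. -/
def XorDerives {V : Type*} [DecidableEq V] (Φ : Set (Finset (XVar V) × Bool))
    (w : ℕ) (S T : Finset (XVar V)) (sgn : Bool) : Prop :=
  ∃ (t : ℕ) (Seq : ℕ → Finset (XVar V)) (c : ℕ → Finset (XVar V) × Bool),
    Seq 0 = S ∧ Seq t = T ∧
    (∀ i < t, c i ∈ Φ ∧ Seq (i + 1) = symmDiff (Seq i) (c i).1) ∧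
    (∀ i ≤ t, (Seq i).card ≤ w) ∧
    sgn = decide (Odd (((Finset.range t).filter fun i => (c i).2 = true).card))

/-- A width-`w` resolution refutation of `Φ`: a derivation of `⊕∅ = 1` from `⊕∅ = 0`. -/
def XorRefutable {V : Type*} [DecidableEq V] (Φ : Set (Finset (XVar V) × Bool))
    (w : ℕ) : Prop :=
  XorDerives Φ w ∅ ∅ true


set_option linter.unusedSectionVars false

private lemma combine_derivations {V : Type*} [DecidableEq V]
    (Φ : Set (Finset (XVar V) × Bool)) (w : ℕ) (S T : Finset (XVar V))
    (h1 : XorDerives Φ w S T false) (h2 : XorDerives Φ w S T true) :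
    ∃ (t : ℕ) (Seq : ℕ → Finset (XVar V)) (c : ℕ → Finset (XVar V) × Bool),
      Seq 0 = ∅ ∧ Seq t = ∅ ∧
      (∀ i < t, c i ∈ Φ ∧ Seq (i + 1) = symmDiff (Seq i) (c i).1) ∧
      (∀ i ≤ t, (Seq i).card ≤ w + S.card) ∧
      Odd (((Finset.range t).filter fun i => (c i).2 = true).card) := by
  classical
  obtain ⟨t1, S1, c1, h10, h1t, h1s, h1w, h1sgn⟩ := h1
  obtain ⟨t2, S2, c2, h20, h2t, h2s, h2w, h2sgn⟩ := h2
  have hn1 : ¬ Odd (((Finset.range t1).filter fun i => (c1 i).2 = true).card) := by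
    have := h1sgn.symm
    rwa [decide_eq_false_iff_not] at this
  have ho2 : Odd (((Finset.range t2).filter fun i => (c2 i).2 = true).card) := by
    have := h2sgn.symm
    rwa [decide_eq_true_eq] at this
  refine ⟨t1 + t2,
    fun i => symmDiff (if i ≤ t1 then S1 i else S2 (t1 + t2 - i)) S,
    fun i => if i < t1 then c1 i else c2 (t1 + t2 - i - 1), ?_, ?_, ?_, ?_, ?_⟩
  · simp [h10]
  · beta_reduce
    by_cases h : t1 + t2 ≤ t1
    · have ht2 : t2 = 0 := by omega
      rw [if_pos h]
      have : S1 (t1 + t2) = S := by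
        rw [show t1 + t2 = t1 by omega, h1t, ← h2t, ht2, h20]
      rw [this, symmDiff_self]
      rfl
    · rw [if_neg h]
      rw [show t1 + t2 - (t1 + t2) = 0 by omega, h20, symmDiff_self]
      rfl
  · intro i hi
    beta_reduce
    by_cases hcase : i < t1
    · rw [if_pos hcase, if_pos (by omega : i ≤ t1), if_pos (by omega : i + 1 ≤ t1)]
      refine ⟨(h1s i hcase).1, ?_⟩
      rw [(h1s i hcase).2, symmDiff_right_comm]
    · rw [if_neg hcase]
      push_neg at hcase
      have hk1 : 1 ≤ t1 + t2 - i := by omega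
      have hk2 : t1 + t2 - i ≤ t2 := by omega
      have hval : (if i ≤ t1 then S1 i else S2 (t1 + t2 - i)) = S2 (t1 + t2 - i) := by
        by_cases h : i ≤ t1
        · rw [if_pos h, show i = t1 from by omega, h1t,
            show t1 + t2 - t1 = t2 from by omega, h2t]
        · rw [if_neg h]
      have hstep2 := h2s (t1 + t2 - i - 1) (by omega)
      refine ⟨hstep2.1, ?_⟩
      rw [if_neg (by omega : ¬ i + 1 ≤ t1), hval]
      have he : t1 + t2 - i = (t1 + t2 - i - 1) + 1 := by omega
      have hcan : symmDiff (S2 (t1 + t2 - i)) (c2 (t1 + t2 - i - 1)).1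
          = S2 (t1 + t2 - i - 1) := by
        rw [show S2 (t1 + t2 - i) = S2 ((t1 + t2 - i - 1) + 1) from by rw [← he],
          hstep2.2, symmDiff_symmDiff_cancel_right]
      have hrw : S2 (t1 + t2 - (i + 1))
          = symmDiff (S2 (t1 + t2 - i)) (c2 (t1 + t2 - i - 1)).1 := by
        rw [show t1 + t2 - (i+1) = t1 + t2 - i - 1 from by omega, hcan]
      rw [hrw, symmDiff_right_comm]
  · intro i hi
    have hsub : ∀ X : Finset (XVar V), (symmDiff X S).card ≤ X.card + S.card := by
      intro X
      refine le_trans (Finset.card_le_card ?_) (Finset.card_union_le X S)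
      intro x hx
      rw [Finset.mem_symmDiff] at hx
      rw [Finset.mem_union]
      tauto
    beta_reduce
    by_cases h : i ≤ t1
    · rw [if_pos h]
      exact le_trans (hsub _) (by have := h1w i h; omega)
    · rw [if_neg h]
      exact le_trans (hsub _) (by have := h2w (t1 + t2 - i) (by omega); omega)
  · -- parity of the sign count
    have hsplit : Finset.range (t1 + t2) = Finset.range t1 ∪ Finset.Ico t1 (t1 + t2) := by
      rw [Finset.range_eq_Ico, Finset.range_eq_Ico, Finset.Ico_union_Ico_eq_Ico (Nat.zero_le t1) (by omega)]
    rw [hsplit, Finset.filter_union, Finset.card_union_of_disjoint (by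
      refine Finset.disjoint_filter_filter ?_
      simp only [Finset.disjoint_left, Finset.mem_range, Finset.mem_Ico]
      intro a ha
      omega)]
    have hc1 : (Finset.filter (fun i => ((if i < t1 then c1 i else c2 (t1 + t2 - i - 1)).2 = true))
        (Finset.range t1)).card
        = ((Finset.range t1).filter fun i => (c1 i).2 = true).card := by
      congr 1
      apply Finset.filter_congr
      intro j hj
      rw [Finset.mem_range] at hj
      rw [if_pos hj]
    have hc2 : (Finset.filter (fun i => ((if i < t1 then c1 i else c2 (t1 + t2 - i - 1)).2 = true))
        (Finset.Ico t1 (t1 + t2))).card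
        = ((Finset.range t2).filter fun i => (c2 i).2 = true).card := by
      apply Finset.card_bij (fun i _ => t1 + t2 - i - 1)
      · intro a ha
        simp only [Finset.mem_filter, Finset.mem_Ico] at ha
        obtain ⟨⟨ha1, ha2⟩, ha3⟩ := ha
        rw [if_neg (by omega)] at ha3
        simp only [Finset.mem_filter, Finset.mem_range]
        exact ⟨by omega, ha3⟩
      · intro a ha b hb hab
        simp only [Finset.mem_filter, Finset.mem_Ico] at ha hb
        omega
      · intro b hb
        simp only [Finset.mem_filter, Finset.mem_range] at hb
        refine ⟨t1 + t2 - b - 1, ?_, by omega⟩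
        simp only [Finset.mem_filter, Finset.mem_Ico]
        refine ⟨⟨by omega, by omega⟩, ?_⟩
        rw [if_neg (by omega), show t1 + t2 - (t1 + t2 - b - 1) - 1 = b by omega]
        exact hb.2
    rw [hc1, hc2]
    rw [Nat.odd_iff] at hn1 ho2 ⊢
    omega

section PhiAux

variable {V : Type*} [Fintype V] [DecidableEq V]

def fcut (G : SimpleGraph V) [DecidableRel G.Adj] (S : Finset V) : ℕ :=
  (Finset.univ.filter fun p : V × V => p.1 ∈ S ∧ p.2 ∉ S ∧ G.Adj p.1 p.2).card

lemma cutCount_coe (G : SimpleGraph V) [DecidableRel G.Adj] (S : Finset V) :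
    cutCount G ↑S = fcut G S := by
  unfold cutCount fcut
  rw [show {p : V × V | p.1 ∈ (S : Set V) ∧ p.2 ∉ (S : Set V) ∧ G.Adj p.1 p.2}
      = ↑(Finset.univ.filter fun p : V × V => p.1 ∈ S ∧ p.2 ∉ S ∧ G.Adj p.1 p.2) by
    ext p; simp]
  exact Set.ncard_coe_finset _

lemma fcut_submodular (G : SimpleGraph V) [DecidableRel G.Adj] (A B : Finset V) :
    fcut G (A ∪ B) + fcut G (A ∩ B) ≤ fcut G A + fcut G B := by
  classical
  unfold fcut
  rw [Finset.card_filter, Finset.card_filter, Finset.card_filter, Finset.card_filter,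
    ← Finset.sum_add_distrib, ← Finset.sum_add_distrib]
  apply Finset.sum_le_sum
  intro p _
  by_cases h1 : p.1 ∈ A <;> by_cases h2 : p.1 ∈ B <;> by_cases h3 : p.2 ∈ A <;>
    by_cases h4 : p.2 ∈ B <;> by_cases h5 : G.Adj p.1 p.2 <;>
    simp [h1, h2, h3, h4, h5, Finset.mem_union, Finset.mem_inter]

lemma walk_to_order (G : SimpleGraph V) [DecidableRel G.Adj] (r N : ℕ)
    (U : ℕ → Finset V) (h0 : U 0 = ∅) (hN : U N = Finset.univ)
    (hstep : ∀ i < N, (U (i+1) \ U i).card ≤ 1)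
    (hcut : ∀ i ≤ N, fcut G (U i) ≤ r) :
    ∃ π : Fin (Fintype.card V) ≃ V,
      ∀ i : Fin (Fintype.card V), cutCount G (π '' {j | j ≤ i}) ≤ r := by
  classical
  set M : ℕ := (N + 1) * Fintype.card V + 1 with hM
  have hMbig : ∀ s : Finset V, s.card < M := fun s => by
    have h1 := Finset.card_le_univ s
    have h2 : s.card ≤ Fintype.card V := by simpa [Finset.card_univ] using h1
    nlinarith [Nat.zero_le N]
  set Valid : (ℕ → Finset V) → Prop := fun W =>
    W 0 = ∅ ∧ W N = Finset.univ ∧ (∀ i < N, (W (i+1) \ W i).card ≤ 1) ∧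
      (∀ i ≤ N, fcut G (W i) ≤ r) with hValid
  set key : (ℕ → Finset V) → ℕ := fun W =>
    ∑ i ∈ Finset.range (N + 1), (fcut G (W i) * M + (W i).card) with hkeydef
  set K : Set ℕ := {k | ∃ W, Valid W ∧ key W = k} with hK
  have hKne : K.Nonempty := ⟨key U, U, ⟨h0, hN, hstep, hcut⟩, rfl⟩
  obtain ⟨W, hWval, hWkey⟩ := Nat.sInf_mem hKne
  obtain ⟨hW0, hWN, hWstep, hWcut⟩ := hWval
  have hlt : ∀ W', Valid W' → ¬ key W' < key W := by
    intro W' hv hlt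
    have : sInf K ≤ key W' := Nat.sInf_le ⟨W', hv, rfl⟩
    omega
  -- minimal walk is monotone
  have hmono1 : ∀ i < N, W i ⊆ W (i + 1) := by
    intro i hiN
    by_contra hsub
    have hiA : fcut G (W i) ≤ r := hWcut i (le_of_lt hiN)
    have hiB : fcut G (W (i+1)) ≤ r := hWcut (i + 1) hiN
    have hsm := fcut_submodular G (W i) (W (i+1))
    have hi0 : i ≠ 0 := by
      intro h; apply hsub; rw [h, hW0]; exact Finset.empty_subset _
    by_cases hc : fcut G (W i ∩ W (i+1)) ≤ fcut G (W i)
    · -- replace W i by the intersection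
      set W' := Function.update W i (W i ∩ W (i+1)) with hW'
      have hWi' : W' i = W i ∩ W (i+1) := Function.update_self _ _ _
      have hWo : ∀ j, j ≠ i → W' j = W j := fun j hj => Function.update_of_ne hj _ _
      have hiNe : i ≠ N := Nat.ne_of_lt hiN
      have hv : Valid W' := by
        refine ⟨by rw [hWo 0 (Ne.symm hi0), hW0], by rw [hWo N (Ne.symm hiNe), hWN], ?_, ?_⟩
        · intro j hj
          by_cases h : j = i
          · subst h
            rw [hWi', hWo (j+1) (by omega)]
            have he : W (j+1) \ (W j ∩ W (j+1)) = W (j+1) \ W j := by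
              ext x
              simp only [Finset.mem_sdiff, Finset.mem_inter, not_and]
              tauto
            rw [he]; exact hWstep j hj
          · by_cases h1 : j + 1 = i
            · rw [hWo j h, h1, hWi']
              refine le_trans (Finset.card_le_card
                (Finset.sdiff_subset_sdiff Finset.inter_subset_left (le_refl _))) ?_
              rw [← h1]
              exact hWstep j hj
            · rw [hWo j h, hWo (j+1) h1]; exact hWstep j hj
        · intro j hj
          by_cases h : j = i
          · subst h; rw [hWi']; exact le_trans hc hiA
          · rw [hWo j h]; exact hWcut j hj
      have hkl : key W' < key W := by
        refine Finset.sum_lt_sum ?_ ⟨i, Finset.mem_range.mpr (by omega), ?_⟩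
        · intro j _
          by_cases h : j = i
          · subst h
            rw [hWi']
            have h1 : (W j ∩ W (j+1)).card ≤ (W j).card :=
              Finset.card_le_card Finset.inter_subset_left
            have h2 : fcut G (W j ∩ W (j+1)) * M ≤ fcut G (W j) * M :=
              Nat.mul_le_mul_right _ hc
            omega
          · rw [hWo j h]
        · rw [hWi']
          have hss : W i ∩ W (i+1) ⊂ W i := by
            refine ⟨Finset.inter_subset_left, fun h => hsub fun x hx => ?_⟩
            exact (Finset.mem_inter.mp (h hx)).2
          have h1 : (W i ∩ W (i+1)).card < (W i).card := Finset.card_lt_card hss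
          have h2 : fcut G (W i ∩ W (i+1)) * M ≤ fcut G (W i) * M :=
            Nat.mul_le_mul_right _ hc
          omega
      exact hlt W' hv hkl
    · -- replace W (i+1) by the union
      push_neg at hc
      have hcup : fcut G (W i ∪ W (i+1)) < fcut G (W (i+1)) := by omega
      have hi1N : i + 1 ≠ N := by
        intro h
        apply hsub
        rw [h, hWN]; intro x _; exact Finset.mem_univ x
      set W' := Function.update W (i+1) (W i ∪ W (i+1)) with hW'
      have hWi' : W' (i+1) = W i ∪ W (i+1) := Function.update_self _ _ _
      have hWo : ∀ j, j ≠ i + 1 → W' j = W j := fun j hj => Function.update_of_ne hj _ _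
      have hv : Valid W' := by
        refine ⟨by rw [hWo 0 (by omega), hW0], by rw [hWo N (Ne.symm hi1N), hWN], ?_, ?_⟩
        · intro j hj
          by_cases h : j = i
          · subst h
            rw [hWi', hWo j (by omega)]
            have he : (W j ∪ W (j+1)) \ W j = W (j+1) \ W j := by
              ext x
              simp only [Finset.mem_sdiff, Finset.mem_union]
              tauto
            rw [he]; exact hWstep j hj
          · by_cases h1 : j = i + 1
            · subst h1
              rw [hWi', hWo (i+1+1) (by omega)]
              refine le_trans (Finset.card_le_card
                (Finset.sdiff_subset_sdiff (le_refl _) Finset.subset_union_right)) ?_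
              exact hWstep (i+1) hj
            · rw [hWo j h1, hWo (j+1) (by omega)]; exact hWstep j hj
        · intro j hj
          by_cases h : j = i + 1
          · subst h; rw [hWi']; exact le_trans (le_of_lt hcup) hiB
          · rw [hWo j h]; exact hWcut j hj
      have hkl : key W' < key W := by
        refine Finset.sum_lt_sum ?_ ⟨i + 1, Finset.mem_range.mpr (by omega), ?_⟩
        · intro j _
          by_cases h : j = i + 1
          · subst h
            rw [hWi']
            have h1 : (W i ∪ W (i+1)).card < M := hMbig _
            have h3 : (fcut G (W i ∪ W (i+1)) + 1) * M ≤ fcut G (W (i+1)) * M :=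
              Nat.mul_le_mul_right _ hcup
            nlinarith
          · rw [hWo j h]
        · rw [hWi']
          have h1 : (W i ∪ W (i+1)).card < M := hMbig _
          have h3 : (fcut G (W i ∪ W (i+1)) + 1) * M ≤ fcut G (W (i+1)) * M :=
            Nat.mul_le_mul_right _ hcup
          nlinarith
      exact hlt W' hv hkl
  clear hlt hWkey hKne
  -- monotone over intervals
  have hmono : ∀ j k, j ≤ k → k ≤ N → W j ⊆ W k := by
    intro j k
    induction k with
    | zero => intro hjk _
              have hj0 : j = 0 := by omega
              subst hj0; exact Finset.Subset.refl _
    | succ n ih =>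
      intro hjk hkN
      rcases eq_or_lt_of_le hjk with rfl | h
      · exact Finset.Subset.refl _
      · exact le_trans (ih (by omega) (by omega)) (hmono1 n (by omega))
  -- first appearance time
  have hex : ∀ v : V, ∃ i, v ∈ W i := fun v => ⟨N, by rw [hWN]; exact Finset.mem_univ v⟩
  set τ : V → ℕ := fun v => Nat.find (hex v) with hτ
  have hτmem : ∀ v, v ∈ W (τ v) := fun v => Nat.find_spec (hex v)
  have hτmin : ∀ v j, j < τ v → v ∉ W j := fun v j hj => Nat.find_min (hex v) hj
  have hτle : ∀ v, τ v ≤ N := fun v => Nat.find_le (by rw [hWN]; exact Finset.mem_univ v)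
  have hτinj : Function.Injective τ := by
    intro u v huv
    have hu := hτmem u
    have hv := hτmem v
    rw [huv] at hu
    rcases Nat.eq_zero_or_pos (τ v) with h0' | h0'
    · rw [h0', hW0] at hv; exact absurd hv (Finset.notMem_empty v)
    · obtain ⟨m, hm⟩ : ∃ m, τ v = m + 1 := ⟨τ v - 1, by omega⟩
      have hcard : (W (m+1) \ W m).card ≤ 1 := hWstep m (by have := hτle v; omega)
      have hu' : u ∈ W (m+1) \ W m := by
        rw [Finset.mem_sdiff]
        refine ⟨by rw [← hm]; exact hu, hτmin u m (by omega)⟩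
      have hv' : v ∈ W (m+1) \ W m := by
        rw [Finset.mem_sdiff]
        exact ⟨by rw [← hm]; exact hv, hτmin v m (by omega)⟩
      exact Finset.card_le_one.mp hcard u hu' v hv'
  have hWfilter : ∀ i, i ≤ N → W i = Finset.univ.filter (fun v => τ v ≤ i) := by
    intro i hi
    ext v
    simp only [Finset.mem_filter, Finset.mem_univ, true_and]
    exact ⟨fun hv => Nat.find_le hv, fun hv => hmono (τ v) i hv hi (hτmem v)⟩
  let rel : V → V → Prop := fun u v => τ u ≤ τ v
  have hrel_dec : DecidableRel rel := fun u v => Nat.decLe _ _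
  haveI : IsTrans V rel := ⟨fun a b c => Nat.le_trans⟩
  haveI : Std.Antisymm rel := ⟨fun a b h1 h2 => hτinj (Nat.le_antisymm h1 h2)⟩
  haveI : Std.Total rel := ⟨fun a b => Nat.le_total _ _⟩
  haveI : Std.Refl rel := ⟨fun a => Nat.le_refl _⟩
  let l := Finset.sort Finset.univ rel
  have hlen : l.length = Fintype.card V := by
    simp [l, Finset.length_sort, Finset.card_univ]
  have hnd : l.Nodup := Finset.sort_nodup Finset.univ rel
  have hsorted : l.Pairwise rel := Finset.pairwise_sort Finset.univ rel
  let π0 : Fin (Fintype.card V) → V := fun i => l.get (Fin.cast hlen.symm i)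
  have hπ0inj : Function.Injective π0 := by
    intro a b hab
    have h := (List.nodup_iff_injective_get.mp hnd) hab
    have : (Fin.cast hlen.symm a : ℕ) = (Fin.cast hlen.symm b : ℕ) := by rw [h]
    exact Fin.ext (by simpa using this)
  have hbij : Function.Bijective π0 :=
    (Fintype.bijective_iff_injective_and_card π0).mpr ⟨hπ0inj, by simp⟩
  refine ⟨Equiv.ofBijective π0 hbij, ?_⟩
  intro i
  have hrelmono : ∀ a b : Fin (Fintype.card V), a ≤ b → τ (π0 a) ≤ τ (π0 b) := by
    intro a b hab
    have h : Fin.cast hlen.symm a ≤ Fin.cast hlen.symm b := by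
      rw [Fin.le_def] at hab ⊢
      simpa using hab
    exact hsorted.rel_get_of_le h
  have himg : ((Equiv.ofBijective π0 hbij) '' {j | j ≤ i}) = ↑(W (τ (π0 i))) := by
    rw [hWfilter (τ (π0 i)) (hτle _)]
    ext v
    simp only [Set.mem_image, Finset.coe_filter, Set.mem_setOf_eq, Finset.mem_univ, true_and,
      Equiv.ofBijective_apply]
    constructor
    · rintro ⟨j, hj, rfl⟩
      exact hrelmono j i hj
    · intro hv
      obtain ⟨j, rfl⟩ := hbij.2 v
      rcases le_or_gt j i with h | h
      · exact ⟨j, h, rfl⟩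
      · have h1 : τ (π0 i) ≤ τ (π0 j) := hrelmono i j (le_of_lt h)
        have h2 : π0 i = π0 j := hπ0inj (hτinj (Nat.le_antisymm h1 hv)) ▸ rfl
        exact ⟨i, le_refl _, by rw [← h2]⟩
  rw [himg, cutCount_coe]
  exact hWcut _ (hτle _)

def Acon (v u : V) : Finset (XVar V) × Bool := ({(false, v, u), (true, v, u)}, false)
def Bcon (G : SimpleGraph V) [DecidableRel G.Adj] (v : V) : Finset (XVar V) × Bool :=
  ((G.neighborFinset v).image (fun u => (true, v, u)), false)
def Ccon (f g : Sym2 V → Bool) (v u : V) : Finset (XVar V) × Bool :=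
  ({(false, v, u), (false, u, v)}, f s(v, u) ^^ g s(v, u))

lemma Ccon_symm (f g : Sym2 V → Bool) (v u : V) : Ccon f g v u = Ccon f g u v := by
  unfold Ccon
  rw [Finset.pair_comm, Sym2.eq_swap]

lemma Acon_ne_Bcon (G : SimpleGraph V) [DecidableRel G.Adj] (v u w : V) :
    Acon v u ≠ Bcon G w := by
  intro h
  have h1 : (false, v, u) ∈ (Acon (V := V) v u).1 := by simp [Acon]
  rw [h] at h1
  simp [Bcon] at h1

lemma Acon_ne_Ccon (f g : Sym2 V → Bool) (v u w x : V) : Acon v u ≠ Ccon f g w x := by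
  intro h
  have h1 : (true, v, u) ∈ (Acon (V := V) v u).1 := by simp [Acon]
  rw [h] at h1
  simp [Ccon] at h1

lemma Bcon_inj (G : SimpleGraph V) [DecidableRel G.Adj] (hreg : ∀ v, G.degree v = 3)
    (v u : V) (h : Bcon G v = Bcon G u) : v = u := by
  have hne : (G.neighborFinset v).Nonempty := by
    rw [← Finset.card_pos, ← SimpleGraph.degree, hreg]; omega
  obtain ⟨w, hw⟩ := hne
  have h1 : (true, v, w) ∈ (Bcon G v).1 := Finset.mem_image_of_mem _ hw
  rw [h] at h1
  simp only [Bcon, Finset.mem_image, Prod.mk.injEq] at h1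
  obtain ⟨x, -, -, h2, -⟩ := h1
  exact h2.symm

lemma mem_con_y (G : SimpleGraph V) [DecidableRel G.Adj] (f g : Sym2 V → Bool)
    (d : Finset (XVar V) × Bool) (hd : d ∈ phiSystem G f g) (v u : V)
    (hm : (true, v, u) ∈ d.1) : d = Acon v u ∨ d = Bcon G v := by
  rcases hd with ⟨v', u', -, rfl⟩ | ⟨v', rfl⟩ | ⟨v', u', -, rfl⟩
  · left
    simp only [Finset.mem_insert, Finset.mem_singleton, Prod.mk.injEq] at hm
    rcases hm with ⟨h, -⟩ | ⟨-, h1, h2⟩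
    · exact absurd h (by simp)
    · rw [Acon, h1, h2]
  · right
    simp only [Finset.mem_image, SimpleGraph.mem_neighborFinset, Prod.mk.injEq] at hm
    obtain ⟨a, -, -, h1, -⟩ := hm
    rw [Bcon, h1]
  · exfalso
    simp only [Finset.mem_insert, Finset.mem_singleton, Prod.mk.injEq] at hm
    rcases hm with ⟨h, -⟩ | ⟨h, -⟩ <;> exact absurd h (by simp)

lemma mem_con_x (G : SimpleGraph V) [DecidableRel G.Adj] (f g : Sym2 V → Bool)
    (d : Finset (XVar V) × Bool) (hd : d ∈ phiSystem G f g) (v u : V)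
    (hm : (false, v, u) ∈ d.1) : d = Acon v u ∨ d = Ccon f g v u := by
  rcases hd with ⟨v', u', -, rfl⟩ | ⟨v', rfl⟩ | ⟨v', u', -, rfl⟩
  · left
    simp only [Finset.mem_insert, Finset.mem_singleton, Prod.mk.injEq] at hm
    rcases hm with ⟨-, h1, h2⟩ | ⟨h, -⟩
    · rw [Acon, h1, h2]
    · exact absurd h (by simp)
  · exfalso
    simp only [Finset.mem_image, Prod.mk.injEq] at hm
    obtain ⟨a, -, h, -⟩ := hm
    exact absurd h (by simp)
  · right
    simp only [Finset.mem_insert, Finset.mem_singleton, Prod.mk.injEq] at hm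
    rcases hm with ⟨-, h1, h2⟩ | ⟨-, h1, h2⟩
    · rw [Ccon, h1, h2]
    · rw [h1, h2, Ccon_symm]; rfl

lemma no_refutation (G : SimpleGraph V) [DecidableRel G.Adj]
    (hconn : G.Connected) (hreg : ∀ v, G.degree v = 3)
    (r : ℕ) (hcw : cutwidth G = r + 1) (f g : Sym2 V → Bool)
    (t : ℕ) (Seq : ℕ → Finset (XVar V)) (c : ℕ → Finset (XVar V) × Bool)
    (h0 : Seq 0 = ∅) (ht : Seq t = ∅)
    (hstep : ∀ i < t, c i ∈ phiSystem G f g ∧ Seq (i + 1) = symmDiff (Seq i) (c i).1)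
    (hw : ∀ i ≤ t, (Seq i).card ≤ r)
    (hodd : Odd (((Finset.range t).filter fun i => (c i).2 = true).card)) : False := by
  classical
  set cnt : (Finset (XVar V) × Bool) → ℕ → ℕ :=
    fun d i => ((Finset.range i).filter (fun j => c j = d)).card with hcnt
  set cntV : XVar V → ℕ → ℕ :=
    fun x i => ((Finset.range i).filter (fun j => x ∈ (c j).1)).card with hcntV
  have hcnt_succ : ∀ d i, cnt d (i+1) = cnt d i + (if c i = d then 1 else 0) := by
    intro d i
    simp only [hcnt, Finset.range_add_one, Finset.filter_insert]
    split
    · rw [Finset.card_insert_of_notMem (by simp)]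
    · simp
  have hmemSeq : ∀ i, i ≤ t → ∀ x, (x ∈ Seq i ↔ Odd (cntV x i)) := by
    intro i
    induction i with
    | zero => intro _ x; simp [h0, hcntV]
    | succ n ih =>
      intro hn x
      have hs := (hstep n (by omega)).2
      have hc : cntV x (n+1) = cntV x n + (if x ∈ (c n).1 then 1 else 0) := by
        simp only [hcntV, Finset.range_add_one, Finset.filter_insert]
        split
        · rw [Finset.card_insert_of_notMem (by simp)]
        · simp
      rw [hs, Finset.mem_symmDiff, hc]
      have hxn := ih (by omega) x
      by_cases hxc : x ∈ (c n).1
      · rw [if_pos hxc, Nat.odd_add_one, ← hxn]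
        constructor
        · rintro (⟨-, hbad⟩ | ⟨-, hns⟩)
          · exact absurd hxc hbad
          · exact hns
        · intro h; exact Or.inr ⟨hxc, h⟩
      · rw [if_neg hxc, Nat.add_zero, ← hxn]
        constructor
        · rintro (⟨h, -⟩ | ⟨hbad, -⟩)
          · exact h
          · exact absurd hbad hxc
        · intro h; exact Or.inl ⟨h, hxc⟩
  have hsplit : ∀ (x : XVar V) (d1 d2 : Finset (XVar V) × Bool), d1 ≠ d2 →
      (∀ j < t, (x ∈ (c j).1 ↔ (c j = d1 ∨ c j = d2))) →
      ∀ i, i ≤ t → cntV x i = cnt d1 i + cnt d2 i := by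
    intro x d1 d2 hne hiff i hi
    simp only [hcntV, hcnt]
    rw [Finset.filter_congr (fun j hj => hiff j (by
        rw [Finset.mem_range] at hj; omega))]
    rw [Finset.filter_or, Finset.card_union_of_disjoint]
    rw [Finset.disjoint_left]
    intro j hj1 hj2
    rw [Finset.mem_filter] at hj1 hj2
    exact hne (hj1.2 ▸ hj2.2 ▸ rfl)
  have hy : ∀ v u, G.Adj v u → ∀ i, i ≤ t →
      ((true, v, u) ∈ Seq i ↔ Odd (cnt (Acon v u) i + cnt (Bcon G v) i)) := by
    intro v u hadj i hi
    rw [hmemSeq i hi, hsplit _ _ _ (Acon_ne_Bcon G v u v) ?_ i hi]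
    intro j hj
    constructor
    · exact fun hm => mem_con_y G f g (c j) (hstep j hj).1 v u hm
    · rintro (h | h) <;> rw [h]
      · simp [Acon]
      · exact Finset.mem_image_of_mem _ (by simpa using hadj)
  have hx : ∀ v u, G.Adj v u → ∀ i, i ≤ t →
      ((false, v, u) ∈ Seq i ↔ Odd (cnt (Acon v u) i + cnt (Ccon f g v u) i)) := by
    intro v u hadj i hi
    rw [hmemSeq i hi, hsplit _ _ _ (Acon_ne_Ccon f g v u v u) ?_ i hi]
    intro j hj
    constructor
    · exact fun hm => mem_con_x G f g (c j) (hstep j hj).1 v u hm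
    · rintro (h | h) <;> rw [h]
      · simp [Acon]
      · simp [Ccon]
  have hedge : ∀ v u, G.Adj v u → ∀ i, i ≤ t →
      ((Odd (cnt (Bcon G v) i) ↔ Odd (cnt (Bcon G u) i)) ∨
        ((true, v, u) ∈ Seq i ∨ (false, v, u) ∈ Seq i ∨
         (false, u, v) ∈ Seq i ∨ (true, u, v) ∈ Seq i)) := by
    intro v u hadj i hi
    by_cases h1 : (true, v, u) ∈ Seq i; · right; tauto
    by_cases h2 : (false, v, u) ∈ Seq i; · right; tauto
    by_cases h3 : (false, u, v) ∈ Seq i; · right; tauto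
    by_cases h4 : (true, u, v) ∈ Seq i; · right; tauto
    left
    rw [hy v u hadj i hi] at h1
    rw [hx v u hadj i hi] at h2
    rw [hx u v hadj.symm i hi, Ccon_symm f g u v] at h3
    rw [hy u v hadj.symm i hi] at h4
    rw [Nat.odd_iff] at h1 h2 h3 h4
    rw [Nat.odd_iff, Nat.odd_iff]
    omega
  -- the walk of B-constraint parities
  set U : ℕ → Finset V := fun i => Finset.univ.filter (fun v => Odd (cnt (Bcon G v) i))
    with hU
  have hU0 : U 0 = ∅ := by
    ext v
    simp [hU, hcnt, Nat.odd_iff]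
  have hUmem : ∀ i v, v ∈ U i ↔ Odd (cnt (Bcon G v) i) := by
    intro i v; simp [hU]
  -- endpoint: at time t all B-parities are odd
  have hconst : ∀ v u, G.Adj v u → (Odd (cnt (Bcon G v) t) ↔ Odd (cnt (Bcon G u) t)) := by
    intro v u hadj
    rcases hedge v u hadj t (le_refl t) with h | h
    · exact h
    · rw [ht] at h; simp at h
  have hsame : ∀ v u : V, (Odd (cnt (Bcon G v) t) ↔ Odd (cnt (Bcon G u) t)) := by
    intro v u
    obtain ⟨p⟩ := hconn v u
    induction p with
    | nil => exact Iff.rfl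
    | cons h q ih => exact (hconst _ _ h).trans ih
  have hallodd : ∀ v, Odd (cnt (Bcon G v) t) := by
    by_contra hno
    push_neg at hno
    obtain ⟨v0, hv0⟩ := hno
    have halleven : ∀ v, ¬ Odd (cnt (Bcon G v) t) := fun v h => hv0 ((hsame v v0).mp h)
    have hCeven : ∀ v u, G.Adj v u → ¬ Odd (cnt (Ccon f g v u) t) := by
      intro v u hadj
      have h2 : (false, v, u) ∉ Seq t := by rw [ht]; simp
      have h1 : (true, v, u) ∉ Seq t := by rw [ht]; simp
      rw [hx v u hadj t le_rfl] at h2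
      rw [hy v u hadj t le_rfl] at h1
      have hb := halleven v
      rw [Nat.odd_iff] at h1 h2 hb ⊢
      omega
    set J := (Finset.range t).filter (fun i => (c i).2 = true) with hJ
    have hJcard : J.card = ∑ d ∈ J.image c, (J.filter (fun j => c j = d)).card :=
      Finset.card_eq_sum_card_image c J
    have heven : Even J.card := by
      rw [hJcard]
      refine Finset.even_sum _ fun d hd => ?_
      obtain ⟨j, hjJ, rfl⟩ := Finset.mem_image.mp hd
      have hjt : j < t := Finset.mem_range.mp (Finset.mem_filter.mp hjJ).1
      have hj2 : (c j).2 = true := (Finset.mem_filter.mp hjJ).2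
      have hjPhi := (hstep j hjt).1
      rcases hjPhi with ⟨v', u', -, hcj⟩ | ⟨v', hcj⟩ | ⟨v', u', hadj, hcj⟩
      · rw [hcj] at hj2; simp at hj2
      · rw [hcj] at hj2; simp at hj2
      · have hterm : J.filter (fun j' => c j' = c j)
            = (Finset.range t).filter (fun j' => c j' = c j) := by
          ext j'
          simp only [hJ, Finset.filter_filter, Finset.mem_filter, Finset.mem_range]
          constructor
          · tauto
          · rintro ⟨ha, hb⟩; exact ⟨ha, by rw [hb]; exact hj2, hb⟩
        rw [hterm]
        have hCc : c j = Ccon f g v' u' := hcj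
        rw [hCc]
        have := hCeven v' u' hadj
        rw [Nat.not_odd_iff_even] at this
        exact this
    exact (Nat.not_odd_iff_even.mpr heven) hodd
  have hUt : U t = Finset.univ := by
    ext v
    simp only [hU, Finset.mem_filter, Finset.mem_univ, true_and, iff_true]
    exact hallodd v
  -- steps flip at most one vertex
  have hUstep : ∀ i < t, (U (i+1) \ U i).card ≤ 1 := by
    intro i hi
    rw [Finset.card_le_one]
    have hkey : ∀ a, a ∈ U (i+1) \ U i → c i = Bcon G a := by
      intro a ha
      rcases Finset.mem_sdiff.mp ha with ⟨ha1, ha2⟩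
      rw [hUmem] at ha1
      rw [hUmem] at ha2
      by_contra hne
      rw [hcnt_succ (Bcon G a) i, if_neg hne, Nat.add_zero] at ha1
      exact ha2 ha1
    intro a ha b hb
    exact Bcon_inj G hreg a b ((hkey a ha).symm.trans (hkey b hb))
  -- cut bound
  have hUcut : ∀ i, i ≤ t → fcut G (U i) ≤ r := by
    intro i hi
    refine le_trans ?_ (hw i hi)
    unfold fcut
    apply Finset.card_le_card_of_injOn (fun p : V × V =>
      if (true, p.1, p.2) ∈ Seq i then ((true, p.1, p.2) : XVar V)
      else if (false, p.1, p.2) ∈ Seq i then (false, p.1, p.2)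
      else if (false, p.2, p.1) ∈ Seq i then (false, p.2, p.1)
      else (true, p.2, p.1))
    · intro p hp
      simp only [Finset.coe_filter, Set.mem_setOf_eq, Finset.mem_filter, Finset.mem_univ, true_and] at hp
      obtain ⟨hp1, hp2, hadj⟩ := hp
      have hb1 : Odd (cnt (Bcon G p.1) i) := (hUmem i p.1).mp hp1
      have hb2 : ¬ Odd (cnt (Bcon G p.2) i) := fun h => hp2 ((hUmem i p.2).mpr h)
      have h4 : (true, p.1, p.2) ∈ Seq i ∨ (false, p.1, p.2) ∈ Seq i ∨
          (false, p.2, p.1) ∈ Seq i ∨ (true, p.2, p.1) ∈ Seq i := by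
        rcases hedge p.1 p.2 hadj i hi with h | h
        · exact absurd (h.mp hb1) hb2
        · exact h
      beta_reduce
      split_ifs with e1 e2 e3
      · exact e1
      · exact e2
      · exact e3
      · tauto
    · intro p hp q hq hpq
      simp only [Finset.coe_filter, Set.mem_setOf_eq, Finset.mem_univ, true_and] at hp hq
      obtain ⟨hp1, hp2, -⟩ := hp
      obtain ⟨hq1, hq2, -⟩ := hq
      have hps : (p.1 = q.1 ∧ p.2 = q.2) ∨ p.1 = q.2 ∨ p.2 = q.1 := by
        beta_reduce at hpq
        split_ifs at hpq <;> simp only [Prod.mk.injEq] at hpq <;> tauto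
      rcases hps with h | h | h
      · exact Prod.ext h.1 h.2
      · exact absurd (h ▸ hp1) hq2
      · exact absurd (h.symm ▸ hq1) hp2
  -- conclude via cutwidth
  obtain ⟨pi, hpi⟩ := walk_to_order G r t U hU0 hUt hUstep hUcut
  have hmem : r ∈ { w | ∃ π : Fin (Fintype.card V) ≃ V,
      ∀ i : Fin (Fintype.card V), cutCount G (π '' {j | j ≤ i}) ≤ w } := ⟨pi, hpi⟩
  have hle : cutwidth G ≤ r := Nat.sInf_le hmem
  omega

end PhiAux

/-- If `G` is connected, 3-regular, with cutwidth `r+1`, and `f, g` have different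
parity, then for any sets `S, T` of at most `r/3` variables it cannot hold that
`S` derives `T` with even sign and also with odd sign, both via width-`2r/3`
resolution. -/
theorem phi_stable_parity {V : Type*} [Fintype V] [DecidableEq V]
    (G : SimpleGraph V) [DecidableRel G.Adj]
    (hconn : G.Connected) (hreg : ∀ v, G.degree v = 3)
    (r : ℕ) (hcw : cutwidth G = r + 1)
    (f g : Sym2 V → Bool) (hpar : ¬ (EvenParity G f ↔ EvenParity G g))
    (S T : Finset (XVar V)) (hS : S.card ≤ r / 3) (hT : T.card ≤ r / 3) :
    ¬ (XorDerives (phiSystem G f g) (2 * r / 3) S T false ∧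
       XorDerives (phiSystem G f g) (2 * r / 3) S T true) := by
  rintro ⟨hd1, hd2⟩
  obtain ⟨t, Seq, c, hstart, hend, hsteps, hwid, hoddc⟩ :=
    combine_derivations (phiSystem G f g) (2 * r / 3) S T hd1 hd2
  have hwr : ∀ i ≤ t, (Seq i).card ≤ r := by
    intro i hi
    have := hwid i hi
    omega
  exact no_refutation G hconn hreg r hcw f g t Seq c hstart hend hsteps hwr hoddc
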